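/- For every a > 0, every function f : ℝ → ℝ that is continuously differentiable on a neighborhood of [−a, a], and every s ∈ (−a, a), one has f(s)² ≤ a⁻¹ ∫_{−a}^{a} f(t)² dt + 4a ∫_{−a}^{a} f′(t)² dt. -/

import Mathlib

open MeasureTheory intervalIntegral

/-- One-dimensional pointwise bound by the H¹-norm: for every `a > 0`, every `f : ℝ → ℝ`
continuously differentiable on a neighborhood of `[-a, a]`, and every `s ∈ (-a, a)`,
`f(s)² ≤ a⁻¹ ∫_{-a}^{a} f(t)² dt + 4a ∫_{-a}^{a} f'(t)² dt`. -/
theorem stmt_10 (a : ℝ) (ha : 0 < a) (f : ℝ → ℝ)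
    (hf : ∃ U : Set ℝ, IsOpen U ∧ Set.Icc (-a) a ⊆ U ∧ ContDiffOn ℝ 1 f U)
    (s : ℝ) (hs : s ∈ Set.Ioo (-a) a) :
    (f s) ^ 2 ≤ a⁻¹ * (∫ t in (-a)..a, (f t) ^ 2) + 4 * a * ∫ t in (-a)..a, (deriv f t) ^ 2 := by
  obtain ⟨U, hU, hIU, hfU⟩ := hf
  have haa : (-a) ≤ a := by linarith
  have hsIcc : s ∈ Set.Icc (-a) a := Set.mem_Icc_of_Ioo hs
  have hcf : ContinuousOn f (Set.Icc (-a) a) := (hfU.continuousOn).mono hIU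
  have hcd : ContinuousOn (deriv f) (Set.Icc (-a) a) :=
    (hfU.continuousOn_deriv_of_isOpen hU le_rfl).mono hIU
  -- Bounding function B
  set B : ℝ → ℝ := fun u => (2 * a)⁻¹ * f u ^ 2 + 2 * a * (deriv f u) ^ 2 with hB
  have hcB : ContinuousOn B (Set.Icc (-a) a) := by
    exact (continuousOn_const.mul (hcf.pow 2)).add
      (continuousOn_const.mul (hcd.pow 2))
  -- integrabilities on [-a, a]
  have huIcc : Set.uIcc (-a) a = Set.Icc (-a) a := Set.uIcc_of_le haa
  have hi1 : IntervalIntegrable (fun t => f t ^ 2) volume (-a) a := by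
    apply ContinuousOn.intervalIntegrable; rw [huIcc]; exact hcf.pow 2
  have hi2 : IntervalIntegrable (fun t => (deriv f t) ^ 2) volume (-a) a := by
    apply ContinuousOn.intervalIntegrable; rw [huIcc]; exact hcd.pow 2
  have hiB : IntervalIntegrable B volume (-a) a := by
    apply ContinuousOn.intervalIntegrable; rw [huIcc]; exact hcB
  -- min point of f² on [-a, a]
  obtain ⟨t₀, ht₀, hmin⟩ := isCompact_Icc.exists_isMinOn (α := ℝ) ⟨s, hsIcc⟩ (hcf.pow 2)
  have hmin' : ∀ x ∈ Set.Icc (-a) a, f t₀ ^ 2 ≤ f x ^ 2 := fun x hx => hmin hx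
  have ht₀le : 2 * a * f t₀ ^ 2 ≤ ∫ t in (-a)..a, f t ^ 2 := by
    have := intervalIntegral.integral_mono_on haa intervalIntegrable_const hi1
      (fun x hx => hmin' x hx)
    rw [intervalIntegral.integral_const] at this
    simpa [smul_eq_mul, sub_neg_eq_add, two_mul] using this
  -- FTC for f² from t₀ to s
  have hsub : Set.uIcc t₀ s ⊆ Set.Icc (-a) a := Set.uIcc_subset_Icc ht₀ hsIcc
  have hderiv : ∀ x ∈ Set.uIcc t₀ s,
      HasDerivAt (fun u => f u ^ 2) (2 * f x * deriv f x) x := by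
    intro x hx
    have hxU : x ∈ U := hIU (hsub hx)
    have hdx : HasDerivAt f (deriv f x) x :=
      ((hfU.contDiffAt (hU.mem_nhds hxU)).differentiableAt one_ne_zero).hasDerivAt
    have := hdx.fun_pow 2
    simpa [mul_comm, mul_assoc, mul_left_comm] using this
  have hcg : ContinuousOn (fun u => 2 * f u * deriv f u) (Set.Icc (-a) a) :=
    (continuousOn_const.mul hcf).mul hcd
  have hig : IntervalIntegrable (fun u => 2 * f u * deriv f u) volume t₀ s := by
    apply ContinuousOn.intervalIntegrable
    exact hcg.mono hsub
  have hftc : ∫ u in t₀..s, 2 * f u * deriv f u = f s ^ 2 - f t₀ ^ 2 :=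
    intervalIntegral.integral_eq_sub_of_hasDerivAt hderiv hig
  -- pointwise bound |2 f f'| ≤ B
  have h2a : (0:ℝ) < 2 * a := by linarith
  have hptB : ∀ x, |2 * f x * deriv f x| ≤ B x := by
    intro x
    have h1 : |2 * f x * deriv f x| = 2 * (|f x| * |deriv f x|) := by
      rw [abs_mul, abs_mul]
      simp [abs_of_nonneg, mul_assoc]
    have h2 : 2 * a * (2 * (|f x| * |deriv f x|)) ≤ f x ^ 2 + 4 * a ^ 2 * (deriv f x) ^ 2 := by
      nlinarith [sq_nonneg (|f x| - 2 * a * |deriv f x|), sq_abs (f x), sq_abs (deriv f x)]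
    have hBx : B x = (2 * a)⁻¹ * (f x ^ 2 + 4 * a ^ 2 * (deriv f x) ^ 2) := by
      simp only [hB]
      field_simp
      ring
    rw [h1, hBx, inv_mul_eq_div, le_div_iff₀ h2a]
    nlinarith [h2]
  have hBnonneg : ∀ x, 0 ≤ B x := fun x => (abs_nonneg _).trans (hptB x)
  -- bound the integral ∫_{t₀}^s 2ff' by ∫_{-a}^a B
  set m := min t₀ s
  set M := max t₀ s
  have hmem : m ∈ Set.Icc (-a) a ∧ M ∈ Set.Icc (-a) a := by
    constructor
    · rcases min_cases t₀ s with ⟨h, _⟩ | ⟨h, _⟩ <;> simp [m, h, ht₀, hsIcc]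
    · rcases max_cases t₀ s with ⟨h, _⟩ | ⟨h, _⟩ <;> simp [M, h, ht₀, hsIcc]
  have hmM : m ≤ M := min_le_max
  have habs : |∫ u in t₀..s, 2 * f u * deriv f u| ≤ ∫ u in m..M, |2 * f u * deriv f u| := by
    rcases le_total t₀ s with h | h
    · have : m = t₀ ∧ M = s := ⟨min_eq_left h, max_eq_right h⟩
      rw [this.1, this.2]
      exact intervalIntegral.abs_integral_le_integral_abs h
    · have : m = s ∧ M = t₀ := ⟨min_eq_right h, max_eq_left h⟩
      rw [this.1, this.2, intervalIntegral.integral_symm, abs_neg]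
      exact intervalIntegral.abs_integral_le_integral_abs h
  have hsubmM : Set.Icc m M ⊆ Set.Icc (-a) a :=
    Set.Icc_subset_Icc hmem.1.1 hmem.2.2
  have higabs : IntervalIntegrable (fun u => |2 * f u * deriv f u|) volume m M := by
    apply ContinuousOn.intervalIntegrable
    rw [Set.uIcc_of_le hmM]
    exact (hcg.mono hsubmM).abs
  have hiBmM : IntervalIntegrable B volume m M := by
    apply ContinuousOn.intervalIntegrable
    rw [Set.uIcc_of_le hmM]
    exact hcB.mono hsubmM
  have h2 : ∫ u in m..M, |2 * f u * deriv f u| ≤ ∫ u in m..M, B u :=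
    intervalIntegral.integral_mono_on hmM higabs hiBmM (fun x _ => hptB x)
  have h3 : ∫ u in m..M, B u ≤ ∫ u in (-a)..a, B u := by
    apply intervalIntegral.integral_mono_interval hmem.1.1 hmM hmem.2.2 _ hiB
    exact Filter.Eventually.of_forall hBnonneg
  have hBval : ∫ u in (-a)..a, B u
      = (2 * a)⁻¹ * (∫ t in (-a)..a, f t ^ 2) + 2 * a * ∫ t in (-a)..a, (deriv f t) ^ 2 := by
    rw [hB, intervalIntegral.integral_add ((hi1.const_mul _)) (hi2.const_mul _),
      intervalIntegral.integral_const_mul, intervalIntegral.integral_const_mul]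
  have hd2nonneg : 0 ≤ ∫ t in (-a)..a, (deriv f t) ^ 2 :=
    intervalIntegral.integral_nonneg haa (fun x _ => sq_nonneg _)
  have hft₀ : f t₀ ^ 2 ≤ (2 * a)⁻¹ * ∫ t in (-a)..a, f t ^ 2 := by
    rw [inv_mul_eq_div, le_div_iff₀ h2a]
    nlinarith [ht₀le]
  have hfs : f s ^ 2 ≤ f t₀ ^ 2 + ∫ u in (-a)..a, B u := by
    have := (le_abs_self _).trans (habs.trans (h2.trans h3))
    linarith [hftc ▸ this]
  rw [hBval] at hfs
  have hinv : (2 * a)⁻¹ * (∫ t in (-a)..a, f t ^ 2) + (2 * a)⁻¹ * (∫ t in (-a)..a, f t ^ 2)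
      = a⁻¹ * ∫ t in (-a)..a, f t ^ 2 := by
    field_simp
    ring
  nlinarith [hft₀, hfs, hd2nonneg, ha]
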